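/- Fix a nonprincipal ultrafilter 𝔲 on ℕ and, for a set X, let *X := X^ℕ/𝔲 denote its ultrapower (two sequences being identified when they agree on a set in 𝔲). With the real quadratic notation, let *A ⊆ *O_K ⊆ *K be the ultrapowers of A ⊆ O_K ⊆ K (so *K is a field), and let ⟨*A⟩ := ⋃_{n≥1}(*A + ⋯ + *A) (the union over n of the n-fold sumsets of *A), which is a subring of *K. Then the field of fractions of ⟨*A⟩ inside *K is all of *K: every element of *K can be written as a/b with a, b ∈ ⟨*A⟩ and b ≠ 0. -/

import Mathlib

open NumberField Filter

noncomputable section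

/-- The `n`-fold sumset `S + ⋯ + S` in an additive commutative monoid. -/
def sumFoldM {M : Type*} [AddCommMonoid M] (S : Set M) (n : ℕ) : Set M :=
  {t : M | ∃ f : Fin n → M, (∀ i, f i ∈ S) ∧ t = ∑ i, f i}

/-- The ultrapower `*S ⊆ *K` of a subset `S ⊆ K` along the ultrafilter `𝔲`. -/
def starSet {K : Type*} (𝔲 : Ultrafilter ℕ) (S : Set K) : Set (Filter.Germ (𝔲 : Filter ℕ) K) :=
  {z : Filter.Germ (𝔲 : Filter ℕ) K |
    ∃ u : ℕ → K, (∀ᶠ n in (𝔲 : Filter ℕ), u n ∈ S) ∧ z = (u : Filter.Germ (𝔲 : Filter ℕ) K)}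

/-- The quasicrystalline ring `A = {α ∈ O_K : |α′| ≤ 1}` of a real quadratic field, as a
subset of `K`. -/
def Aqc (K : Type*) [Field K] [NumberField K] (ι : K →+* ℝ) (g : K ≃+* K) : Set K :=
  {β : K | ∃ α : 𝓞 K, (α : K) = β ∧ |ι (g (α : K))| ≤ 1}

/-- The subring `⟨*A⟩ = ⋃_{n≥1} (*A + ⋯ + *A)` of `*K` generated by the ultrapower of the
quasicrystalline ring `A`. -/
def starRingGen (K : Type*) [Field K] [NumberField K] (ι : K →+* ℝ) (g : K ≃+* K)
    (𝔲 : Ultrafilter ℕ) : Set (Filter.Germ (𝔲 : Filter ℕ) K) :=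
  ⋃ n : ℕ, ⋃ _ : 1 ≤ n, sumFoldM (starSet 𝔲 (Aqc K ι g)) n

-- key lemma: product over the two embeddings
lemma norm_two_embeddings {K : Type*} [Field K] [NumberField K]
    (hdeg : Module.finrank ℚ K = 2) (ι : K →+* ℝ)
    (g : K ≃+* K) (hg : g ≠ RingEquiv.refl K) (x : K) :
    ‖algebraMap ℚ ℂ (Algebra.norm ℚ x)‖ = |ι x| * |ι (g x)| := by
  classical
  set σ₁ : K →+* ℂ := Complex.ofRealHom.comp ι with hσ₁
  set σ₂ : K →+* ℂ := σ₁.comp (g : K →+* K) with hσ₂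
  have hne : σ₁ ≠ σ₂ := by
    intro h
    apply hg
    ext y
    have := congrArg (fun f : K →+* ℂ => f y) h
    simp only [hσ₁, hσ₂, RingHom.comp_apply, RingEquiv.coe_toRingHom,
      Complex.ofRealHom_eq_coe, Complex.ofReal_inj] at this
    exact (ι.injective this).symm
  have hcard : Fintype.card (K →+* ℂ) = 2 := by
    rw [NumberField.Embeddings.card K ℂ, hdeg]
  have huniv : (Finset.univ : Finset (K →+* ℂ)) = {σ₁, σ₂} := by
    symm
    apply Finset.eq_univ_of_card
    rw [hcard, Finset.card_insert_of_notMem (by simpa using hne), Finset.card_singleton]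
  have hprod : algebraMap ℚ ℂ (Algebra.norm ℚ x) = σ₁ x * σ₂ x := by
    rw [Algebra.norm_eq_prod_embeddings ℚ ℂ x,
      ← Fintype.prod_equiv (RingHom.equivRatAlgHom K ℂ) (fun f : K →+* ℂ => f x)
        (fun φ : K →ₐ[ℚ] ℂ => φ x) (fun f => rfl), huniv,
      Finset.prod_insert (by simpa using hne), Finset.prod_singleton]
  rw [hprod, norm_mul]
  simp [hσ₁, hσ₂, Complex.norm_real, Real.norm_eq_abs]


/-- `Frac(⟨*A⟩) = *K`: every element of the ultrapower `*K` is a quotient of two elements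
of the ring generated by `*A`. -/
theorem stmt17 (K : Type*) [Field K] [NumberField K]
    (hdeg : Module.finrank ℚ K = 2) (ι : K →+* ℝ)
    (g : K ≃+* K) (hg : g ≠ RingEquiv.refl K)
    (θu : (𝓞 K)ˣ) (hθ : 1 < ι ((θu : 𝓞 K) : K))
    (hfund : ∀ v : (𝓞 K)ˣ, ∃ n : ℤ, ((v : 𝓞 K) : K) = (((θu ^ n : (𝓞 K)ˣ) : 𝓞 K) : K)
      ∨ ((v : 𝓞 K) : K) = -(((θu ^ n : (𝓞 K)ˣ) : 𝓞 K) : K))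
    (𝔲 : Ultrafilter ℕ) (h𝔲 : (𝔲 : Filter ℕ) ≤ Filter.cofinite) :
    ∀ z : Filter.Germ (𝔲 : Filter ℕ) K,
      ∃ a ∈ starRingGen K ι g 𝔲, ∃ b ∈ starRingGen K ι g 𝔲, b ≠ 0 ∧ z = a / b := by
  set θK : K := ((θu : 𝓞 K) : K) with hθK
  -- |ι (g θK)| < 1
  have hnorm : |(RingOfIntegers.norm ℚ (θu : 𝓞 K) : ℚ)| = 1 :=
    NumberField.isUnit_iff_norm.mp θu.isUnit
  have hnorm' : ‖algebraMap ℚ ℂ (Algebra.norm ℚ θK)‖ = 1 := by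
    rw [← RingOfIntegers.coe_norm]
    rw [show (algebraMap ℚ ℂ) ((RingOfIntegers.norm ℚ (θu : 𝓞 K) : ℚ)) =
      (((RingOfIntegers.norm ℚ (θu : 𝓞 K) : ℚ) : ℝ) : ℂ) by push_cast; rfl]
    rw [Complex.norm_real, Real.norm_eq_abs]
    rw [← Rat.cast_abs, hnorm, Rat.cast_one]
  have hkey : |ι θK| * |ι (g θK)| = 1 := by
    rw [← norm_two_embeddings hdeg ι g hg θK, hnorm']
  have habs : |ι θK| = ι θK := abs_of_pos (lt_trans one_pos hθ)
  set t : ℝ := |ι (g θK)| with htdef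
  have ht1 : t < 1 := by
    nlinarith [abs_nonneg (ι (g θK))]
  have ht0 : 0 ≤ t := abs_nonneg _
  have hθK0 : θK ≠ 0 := by
    intro h; rw [h, map_zero] at hθ; linarith
  intro z
  induction z using Filter.Germ.inductionOn with
  | h u =>
  -- choose numerators and denominators
  have hud : ∀ n : ℕ, ∃ p : (𝓞 K) × (𝓞 K), p.2 ≠ 0 ∧ u n = (p.1 : K) / (p.2 : K) := by
    intro n
    obtain ⟨x, y, hy, hxy⟩ := IsFractionRing.div_surjective (A := 𝓞 K) (u n)
    exact ⟨(x, y), nonZeroDivisors.ne_zero hy, hxy.symm⟩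
  choose p hp2 hpu using hud
  -- choose exponents
  have hm : ∀ n : ℕ, ∃ m : ℕ,
      t ^ m * max |ι (g ((p n).1 : K))| |ι (g ((p n).2 : K))| ≤ 1 := by
    intro n
    set C : ℝ := max |ι (g ((p n).1 : K))| |ι (g ((p n).2 : K))| with hC
    have hC0 : 0 ≤ C := le_trans (abs_nonneg _) (le_max_left _ _)
    obtain ⟨m, hm⟩ := exists_pow_lt_of_lt_one (x := 1 / (C + 1)) (by positivity) ht1
    refine ⟨m, ?_⟩
    have h1 : t ^ m * C ≤ (1 / (C + 1)) * C := by
      apply mul_le_mul_of_nonneg_right hm.le hC0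
    have h2 : (1 / (C + 1)) * C ≤ 1 := by
      rw [div_mul_eq_mul_div, one_mul, div_le_one (by positivity)]; linarith
    linarith
  choose m hmle using hm
  set va : ℕ → K := fun n => ((p n).1 : K) * θK ^ (m n) with hva
  set vb : ℕ → K := fun n => ((p n).2 : K) * θK ^ (m n) with hvb
  have hmemA : ∀ (q : 𝓞 K) (n : ℕ), |ι (g (q : K))| ≤ max |ι (g ((p n).1 : K))| |ι (g ((p n).2 : K))| →
      ((q : K) * θK ^ (m n)) ∈ Aqc K ι g := by
    intro q n hq
    refine ⟨q * (θu : 𝓞 K) ^ (m n), by push_cast; ring, ?_⟩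
    have : ((q * (θu : 𝓞 K) ^ (m n) : 𝓞 K) : K) = (q : K) * θK ^ (m n) := by push_cast; rfl
    rw [this, map_mul, map_mul, map_pow, map_pow, abs_mul, abs_pow]
    calc |ι (g (q : K))| * |ι (g θK)| ^ m n
        ≤ (max |ι (g ((p n).1 : K))| |ι (g ((p n).2 : K))|) * t ^ m n := by
          apply mul_le_mul_of_nonneg_right hq (by positivity)
      _ ≤ 1 := by rw [mul_comm]; exact hmle n
  have hmemGen : ∀ v : ℕ → K, (∀ n, v n ∈ Aqc K ι g) →
      (v : Filter.Germ (𝔲 : Filter ℕ) K) ∈ starRingGen K ι g 𝔲 := by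
    intro v hv
    refine Set.mem_iUnion.mpr ⟨1, Set.mem_iUnion.mpr ⟨le_refl 1, ?_⟩⟩
    refine ⟨fun _ => (v : Filter.Germ (𝔲 : Filter ℕ) K), fun _ => ⟨v, Eventually.of_forall hv, rfl⟩, ?_⟩
    simp
  have hvb0 : ∀ n, vb n ≠ 0 := by
    intro n
    simp only [hvb]
    apply mul_ne_zero
    · rw [ne_eq, RingOfIntegers.coe_eq_zero_iff]; exact hp2 n
    · exact pow_ne_zero _ hθK0
  refine ⟨(va : Filter.Germ (𝔲 : Filter ℕ) K),
    hmemGen va (fun n => hmemA _ n (le_max_left _ _)),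
    (vb : Filter.Germ (𝔲 : Filter ℕ) K),
    hmemGen vb (fun n => hmemA _ n (le_max_right _ _)), ?_, ?_⟩
  · intro h
    have h0 : (((0 : ℕ → K) : Filter.Germ (𝔲 : Filter ℕ) K)) = (0 : Filter.Germ (𝔲 : Filter ℕ) K) := rfl
    rw [← h0, Filter.Germ.coe_eq] at h
    obtain ⟨n, hn⟩ := h.exists
    exact hvb0 n (by simpa using hn)
  · rw [← Filter.Germ.coe_div, Filter.Germ.coe_eq]
    apply Eventually.of_forall
    intro n
    rw [hpu n]
    show (p n).1 / (p n).2 = va n / vb n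
    rw [hva, hvb]
    rw [mul_div_mul_right _ _ (pow_ne_zero _ hθK0)]
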